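/- Strict diagonal dominance and invertibility of the implicit temperature matrix M_T: Let γ > 1, let I, J ≥ 1 and index cells by (i,j) ∈ Fin I × Fin J. Let Δt > 0, let Δx_i > 0, Δy_j > 0, interface spacings Δx_{i+1/2} > 0 and Δy_{j+1/2} > 0, interface heat conductivities κˣ_{i+1/2,j} > 0, κʸ_{i,j+1/2} > 0, interface weights ωˣ_{i+1/2,j} ∈ (0,1], ωʸ_{i,j+1/2} ∈ (0,1], and cell densities ρ_{i,j} > 0 be given. Define M_T ∈ Matrix (Fin I × Fin J) (Fin I × Fin J) ℝ by: M_T[(i,j),(i∓1,j)] = κˣ_{i∓1/2,j}·Δt·ωˣ_{i∓1/2,j}/(2·Δx_i·Δx_{i∓1/2}) whenever i∓1 ∈ Fin I; M_T[(i,j),(i,j∓1)] = κʸ_{i,j∓1/2}·Δt·ωʸ_{i,j∓1/2}/(2·Δy_j·Δy_{j∓1/2}) whenever j∓1 ∈ Fin J; M_T[(i,j),(i,j)] = ρ_{i,j}/(γ−1) plus the sum of the off-diagonal entries of row (i,j) just listed; and M_T = 0 elsewhere. Then M_T is strictly row diagonally dominant, i.e. |M_T[k,k]| > Σ_{l ≠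 k} |M_T[k,l]| for every row k, and consequently M_T is invertible. -/
import Mathlib

set_option maxHeartbeats 1000000 in
/-- Strict diagonal dominance and invertibility of the implicit temperature
matrix `M_T` of the scheme.  Cells are indexed by `Fin I × Fin J`; for a cell
`(i,j)`, `κx i j`, `ωx i j`, `Δxh i` denote the quantities `κˣ_{i+1/2,j}`,
`ωˣ_{i+1/2,j}`, `Δx_{i+1/2}` at the x-interface between cells `i` and `i+1`
(so the interface `i−1/2` corresponds to index `i-1`), and similarly in the
y-direction. -/
theorem MT_strictly_diagonally_dominant_and_invertible
    (γ : ℝ) (hγ : 1 < γ)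
    (I J : ℕ) (hI : 1 ≤ I) (hJ : 1 ≤ J)
    (Δt : ℝ) (hΔt : 0 < Δt)
    (Δx Δxh Δy Δyh : ℕ → ℝ)
    (hΔx : ∀ i, 0 < Δx i) (hΔxh : ∀ i, 0 < Δxh i)
    (hΔy : ∀ j, 0 < Δy j) (hΔyh : ∀ j, 0 < Δyh j)
    (κx κy ωx ωy ρc : ℕ → ℕ → ℝ)
    (hκx : ∀ i j, 0 < κx i j) (hκy : ∀ i j, 0 < κy i j)
    (hωx : ∀ i j, 0 < ωx i j ∧ ωx i j ≤ 1)
    (hωy : ∀ i j, 0 < ωy i j ∧ ωy i j ≤ 1)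
    (hρ : ∀ i j, 0 < ρc i j)
    (M : Matrix (Fin I × Fin J) (Fin I × Fin J) ℝ)
    (hM : ∀ k l : Fin I × Fin J,
      M k l =
        (let i := (k.1 : ℕ); let j := (k.2 : ℕ)
         let i' := (l.1 : ℕ); let j' := (l.2 : ℕ)
         let cL : ℝ := κx (i-1) j * Δt * ωx (i-1) j / (2 * Δx i * Δxh (i-1))
         let cR : ℝ := κx i j * Δt * ωx i j / (2 * Δx i * Δxh i)
         let cD : ℝ := κy i (j-1) * Δt * ωy i (j-1) / (2 * Δy j * Δyh (j-1))
         let cU : ℝ := κy i j * Δt * ωy i j / (2 * Δy j * Δyh j)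
         if i' = i ∧ j' = j then
           ρc i j / (γ - 1)
                  + (if 0 < i then cL else 0) + (if i + 1 < I then cR else 0)
                  + (if 0 < j then cD else 0) + (if j + 1 < J then cU else 0)
         else if i' + 1 = i ∧ j' = j then cL
         else if i' = i + 1 ∧ j' = j then cR
         else if i' = i ∧ j' + 1 = j then cD
         else if i' = i ∧ j' = j + 1 then cU
         else 0)) :
    (∀ k : Fin I × Fin J, ∑ l ∈ Finset.univ.erase k, |M k l| < |M k k|)
    ∧ IsUnit M := by
  have hγ' : 0 < γ - 1 := by linarith
  have hite : ∀ (c : ℝ) (P : Prop) [Decidable P], 0 ≤ c → 0 ≤ if P then c else 0 := by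
    intro c P _ hc
    split_ifs <;> simp [hc]
  have key : ∀ k : Fin I × Fin J, ∑ l ∈ Finset.univ.erase k, |M k l| < |M k k| := by
    rintro ⟨i0, j0⟩
    have hcL : (0:ℝ) < κx ((i0:ℕ)-1) (j0:ℕ) * Δt * ωx ((i0:ℕ)-1) (j0:ℕ)
        / (2 * Δx (i0:ℕ) * Δxh ((i0:ℕ)-1)) := by
      have := hκx ((i0:ℕ)-1) (j0:ℕ); have := (hωx ((i0:ℕ)-1) (j0:ℕ)).1
      have := hΔx (i0:ℕ); have := hΔxh ((i0:ℕ)-1)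
      positivity
    have hcR : (0:ℝ) < κx (i0:ℕ) (j0:ℕ) * Δt * ωx (i0:ℕ) (j0:ℕ)
        / (2 * Δx (i0:ℕ) * Δxh (i0:ℕ)) := by
      have := hκx (i0:ℕ) (j0:ℕ); have := (hωx (i0:ℕ) (j0:ℕ)).1
      have := hΔx (i0:ℕ); have := hΔxh (i0:ℕ)
      positivity
    have hcD : (0:ℝ) < κy (i0:ℕ) ((j0:ℕ)-1) * Δt * ωy (i0:ℕ) ((j0:ℕ)-1)
        / (2 * Δy (j0:ℕ) * Δyh ((j0:ℕ)-1)) := by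
      have := hκy (i0:ℕ) ((j0:ℕ)-1); have := (hωy (i0:ℕ) ((j0:ℕ)-1)).1
      have := hΔy (j0:ℕ); have := hΔyh ((j0:ℕ)-1)
      positivity
    have hcU : (0:ℝ) < κy (i0:ℕ) (j0:ℕ) * Δt * ωy (i0:ℕ) (j0:ℕ)
        / (2 * Δy (j0:ℕ) * Δyh (j0:ℕ)) := by
      have := hκy (i0:ℕ) (j0:ℕ); have := (hωy (i0:ℕ) (j0:ℕ)).1
      have := hΔy (j0:ℕ); have := hΔyh (j0:ℕ)
      positivity
    have hdiag : M (i0, j0) (i0, j0)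
        = ρc (i0:ℕ) (j0:ℕ) / (γ - 1)
          + (if 0 < (i0:ℕ) then κx ((i0:ℕ)-1) (j0:ℕ) * Δt * ωx ((i0:ℕ)-1) (j0:ℕ)
              / (2 * Δx (i0:ℕ) * Δxh ((i0:ℕ)-1)) else 0)
          + (if (i0:ℕ) + 1 < I then κx (i0:ℕ) (j0:ℕ) * Δt * ωx (i0:ℕ) (j0:ℕ)
              / (2 * Δx (i0:ℕ) * Δxh (i0:ℕ)) else 0)
          + (if 0 < (j0:ℕ) then κy (i0:ℕ) ((j0:ℕ)-1) * Δt * ωy (i0:ℕ) ((j0:ℕ)-1)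
              / (2 * Δy (j0:ℕ) * Δyh ((j0:ℕ)-1)) else 0)
          + (if (j0:ℕ) + 1 < J then κy (i0:ℕ) (j0:ℕ) * Δt * ωy (i0:ℕ) (j0:ℕ)
              / (2 * Δy (j0:ℕ) * Δyh (j0:ℕ)) else 0) := by
      rw [hM]
      norm_num
    have hoff : ∀ (i1 : Fin I) (j1 : Fin J), (i1, j1) ≠ (i0, j0) →
        M (i0, j0) (i1, j1)
          = (if (i1:ℕ) + 1 = (i0:ℕ) ∧ (j1:ℕ) = (j0:ℕ) then
              κx ((i0:ℕ)-1) (j0:ℕ) * Δt * ωx ((i0:ℕ)-1) (j0:ℕ)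
                / (2 * Δx (i0:ℕ) * Δxh ((i0:ℕ)-1)) else 0)
          + (if (i1:ℕ) = (i0:ℕ) + 1 ∧ (j1:ℕ) = (j0:ℕ) then
              κx (i0:ℕ) (j0:ℕ) * Δt * ωx (i0:ℕ) (j0:ℕ)
                / (2 * Δx (i0:ℕ) * Δxh (i0:ℕ)) else 0)
          + (if (i1:ℕ) = (i0:ℕ) ∧ (j1:ℕ) + 1 = (j0:ℕ) then
              κy (i0:ℕ) ((j0:ℕ)-1) * Δt * ωy (i0:ℕ) ((j0:ℕ)-1)
                / (2 * Δy (j0:ℕ) * Δyh ((j0:ℕ)-1)) else 0)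
          + (if (i1:ℕ) = (i0:ℕ) ∧ (j1:ℕ) = (j0:ℕ) + 1 then
              κy (i0:ℕ) (j0:ℕ) * Δt * ωy (i0:ℕ) (j0:ℕ)
                / (2 * Δy (j0:ℕ) * Δyh (j0:ℕ)) else 0) := by
      intro i1 j1 hne
      have hne' : ¬((i1 : ℕ) = (i0:ℕ) ∧ (j1 : ℕ) = (j0:ℕ)) := by
        rintro ⟨h1, h2⟩
        exact hne (Prod.ext (Fin.ext h1) (Fin.ext h2))
      rw [hM]
      simp only
      rw [if_neg hne']
      split_ifs <;> first | ring1 | (exfalso; omega)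
    have hsum : ∑ l ∈ Finset.univ.erase (i0, j0), |M (i0, j0) l|
        = ∑ l : Fin I × Fin J,
          ((if (l.1:ℕ) + 1 = (i0:ℕ) ∧ (l.2:ℕ) = (j0:ℕ) then
              κx ((i0:ℕ)-1) (j0:ℕ) * Δt * ωx ((i0:ℕ)-1) (j0:ℕ)
                / (2 * Δx (i0:ℕ) * Δxh ((i0:ℕ)-1)) else 0)
          + (if (l.1:ℕ) = (i0:ℕ) + 1 ∧ (l.2:ℕ) = (j0:ℕ) then
              κx (i0:ℕ) (j0:ℕ) * Δt * ωx (i0:ℕ) (j0:ℕ)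
                / (2 * Δx (i0:ℕ) * Δxh (i0:ℕ)) else 0)
          + (if (l.1:ℕ) = (i0:ℕ) ∧ (l.2:ℕ) + 1 = (j0:ℕ) then
              κy (i0:ℕ) ((j0:ℕ)-1) * Δt * ωy (i0:ℕ) ((j0:ℕ)-1)
                / (2 * Δy (j0:ℕ) * Δyh ((j0:ℕ)-1)) else 0)
          + (if (l.1:ℕ) = (i0:ℕ) ∧ (l.2:ℕ) = (j0:ℕ) + 1 then
              κy (i0:ℕ) (j0:ℕ) * Δt * ωy (i0:ℕ) (j0:ℕ)
                / (2 * Δy (j0:ℕ) * Δyh (j0:ℕ)) else 0)) := by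
      rw [Finset.sum_erase_eq_sub (Finset.mem_univ ((i0, j0) : Fin I × Fin J))
          (f := fun l => |M (i0, j0) l|)]
      have hk0 : |M (i0, j0) (i0, j0)| = |M (i0, j0) (i0, j0)| := rfl
      -- rewrite the big sum term by term
      have hterm : ∀ l ∈ (Finset.univ : Finset (Fin I × Fin J)),
          |M (i0, j0) l| =
          (if l = (i0, j0) then |M (i0, j0) (i0, j0)| else 0)
          + ((if (l.1:ℕ) + 1 = (i0:ℕ) ∧ (l.2:ℕ) = (j0:ℕ) then
              κx ((i0:ℕ)-1) (j0:ℕ) * Δt * ωx ((i0:ℕ)-1) (j0:ℕ)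
                / (2 * Δx (i0:ℕ) * Δxh ((i0:ℕ)-1)) else 0)
          + (if (l.1:ℕ) = (i0:ℕ) + 1 ∧ (l.2:ℕ) = (j0:ℕ) then
              κx (i0:ℕ) (j0:ℕ) * Δt * ωx (i0:ℕ) (j0:ℕ)
                / (2 * Δx (i0:ℕ) * Δxh (i0:ℕ)) else 0)
          + (if (l.1:ℕ) = (i0:ℕ) ∧ (l.2:ℕ) + 1 = (j0:ℕ) then
              κy (i0:ℕ) ((j0:ℕ)-1) * Δt * ωy (i0:ℕ) ((j0:ℕ)-1)
                / (2 * Δy (j0:ℕ) * Δyh ((j0:ℕ)-1)) else 0)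
          + (if (l.1:ℕ) = (i0:ℕ) ∧ (l.2:ℕ) = (j0:ℕ) + 1 then
              κy (i0:ℕ) (j0:ℕ) * Δt * ωy (i0:ℕ) (j0:ℕ)
                / (2 * Δy (j0:ℕ) * Δyh (j0:ℕ)) else 0)) := by
        rintro ⟨i1, j1⟩ -
        by_cases hl : ((i1, j1) : Fin I × Fin J) = (i0, j0)
        · rw [if_pos hl, hl]
          have h1 : (i0:ℕ) + 1 ≠ (i0:ℕ) := by omega
          have h2 : (i0:ℕ) ≠ (i0:ℕ) + 1 := by omega
          have h3 : (j0:ℕ) + 1 ≠ (j0:ℕ) := by omega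
          have h4 : (j0:ℕ) ≠ (j0:ℕ) + 1 := by omega
          rw [if_neg (by simp [h1]), if_neg (by simp [h2]),
            if_neg (by simp [h3]), if_neg (by simp [h4])]
          ring
        · rw [if_neg hl, hoff i1 j1 hl, abs_of_nonneg]
          · ring
          · have := hcL.le; have := hcR.le; have := hcD.le; have := hcU.le
            exact add_nonneg (add_nonneg (add_nonneg (hite _ _ (by assumption))
              (hite _ _ (by assumption))) (hite _ _ (by assumption)))
              (hite _ _ (by assumption))
      rw [Finset.sum_congr rfl hterm, Finset.sum_add_distrib,
        Finset.sum_ite_eq' Finset.univ ((i0, j0) : Fin I × Fin J)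
          (fun _ => |M (i0, j0) (i0, j0)|)]
      simp only [Finset.mem_univ, if_pos]
      ring
    -- compute the four elementary sums
    have hS1 : (∑ l : Fin I × Fin J,
        (if (l.1:ℕ) + 1 = (i0:ℕ) ∧ (l.2:ℕ) = (j0:ℕ) then
          κx ((i0:ℕ)-1) (j0:ℕ) * Δt * ωx ((i0:ℕ)-1) (j0:ℕ)
            / (2 * Δx (i0:ℕ) * Δxh ((i0:ℕ)-1)) else 0))
        = (if 0 < (i0:ℕ) then κx ((i0:ℕ)-1) (j0:ℕ) * Δt * ωx ((i0:ℕ)-1) (j0:ℕ)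
            / (2 * Δx (i0:ℕ) * Δxh ((i0:ℕ)-1)) else 0) := by
      by_cases h0 : 0 < (i0:ℕ)
      · rw [if_pos h0]
        have hlt : (i0:ℕ) - 1 < I := by have := i0.isLt; omega
        have hiff : ∀ l : Fin I × Fin J,
            ((l.1:ℕ) + 1 = (i0:ℕ) ∧ (l.2:ℕ) = (j0:ℕ)) ↔ l = (⟨(i0:ℕ) - 1, hlt⟩, j0) := by
          rintro ⟨i1, j1⟩
          simp only [Prod.mk.injEq, Fin.ext_iff, Fin.val_mk] <;> omega
        simp_rw [hiff]
        simp
      · rw [if_neg h0]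
        exact Finset.sum_eq_zero fun l _ => if_neg (by omega)
    have hS2 : (∑ l : Fin I × Fin J,
        (if (l.1:ℕ) = (i0:ℕ) + 1 ∧ (l.2:ℕ) = (j0:ℕ) then
          κx (i0:ℕ) (j0:ℕ) * Δt * ωx (i0:ℕ) (j0:ℕ)
            / (2 * Δx (i0:ℕ) * Δxh (i0:ℕ)) else 0))
        = (if (i0:ℕ) + 1 < I then κx (i0:ℕ) (j0:ℕ) * Δt * ωx (i0:ℕ) (j0:ℕ)
            / (2 * Δx (i0:ℕ) * Δxh (i0:ℕ)) else 0) := by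
      by_cases h0 : (i0:ℕ) + 1 < I
      · rw [if_pos h0]
        have hiff : ∀ l : Fin I × Fin J,
            ((l.1:ℕ) = (i0:ℕ) + 1 ∧ (l.2:ℕ) = (j0:ℕ)) ↔ l = (⟨(i0:ℕ) + 1, h0⟩, j0) := by
          rintro ⟨i1, j1⟩
          simp only [Prod.mk.injEq, Fin.ext_iff, Fin.val_mk] <;> omega
        simp_rw [hiff]
        simp
      · rw [if_neg h0]
        exact Finset.sum_eq_zero fun l _ => if_neg (by have := l.1.isLt; omega)
    have hS3 : (∑ l : Fin I × Fin J,
        (if (l.1:ℕ) = (i0:ℕ) ∧ (l.2:ℕ) + 1 = (j0:ℕ) then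
          κy (i0:ℕ) ((j0:ℕ)-1) * Δt * ωy (i0:ℕ) ((j0:ℕ)-1)
            / (2 * Δy (j0:ℕ) * Δyh ((j0:ℕ)-1)) else 0))
        = (if 0 < (j0:ℕ) then κy (i0:ℕ) ((j0:ℕ)-1) * Δt * ωy (i0:ℕ) ((j0:ℕ)-1)
            / (2 * Δy (j0:ℕ) * Δyh ((j0:ℕ)-1)) else 0) := by
      by_cases h0 : 0 < (j0:ℕ)
      · rw [if_pos h0]
        have hlt : (j0:ℕ) - 1 < J := by have := j0.isLt; omega
        have hiff : ∀ l : Fin I × Fin J,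
            ((l.1:ℕ) = (i0:ℕ) ∧ (l.2:ℕ) + 1 = (j0:ℕ)) ↔ l = (i0, ⟨(j0:ℕ) - 1, hlt⟩) := by
          rintro ⟨i1, j1⟩
          simp only [Prod.mk.injEq, Fin.ext_iff, Fin.val_mk] <;> omega
        simp_rw [hiff]
        simp
      · rw [if_neg h0]
        exact Finset.sum_eq_zero fun l _ => if_neg (by omega)
    have hS4 : (∑ l : Fin I × Fin J,
        (if (l.1:ℕ) = (i0:ℕ) ∧ (l.2:ℕ) = (j0:ℕ) + 1 then
          κy (i0:ℕ) (j0:ℕ) * Δt * ωy (i0:ℕ) (j0:ℕ)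
            / (2 * Δy (j0:ℕ) * Δyh (j0:ℕ)) else 0))
        = (if (j0:ℕ) + 1 < J then κy (i0:ℕ) (j0:ℕ) * Δt * ωy (i0:ℕ) (j0:ℕ)
            / (2 * Δy (j0:ℕ) * Δyh (j0:ℕ)) else 0) := by
      by_cases h0 : (j0:ℕ) + 1 < J
      · rw [if_pos h0]
        have hiff : ∀ l : Fin I × Fin J,
            ((l.1:ℕ) = (i0:ℕ) ∧ (l.2:ℕ) = (j0:ℕ) + 1) ↔ l = (i0, ⟨(j0:ℕ) + 1, h0⟩) := by
          rintro ⟨i1, j1⟩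
          simp only [Prod.mk.injEq, Fin.ext_iff, Fin.val_mk] <;> omega
        simp_rw [hiff]
        simp
      · rw [if_neg h0]
        exact Finset.sum_eq_zero fun l _ => if_neg (by have := l.2.isLt; omega)
    have hρpos : 0 < ρc (i0:ℕ) (j0:ℕ) / (γ - 1) := div_pos (hρ _ _) hγ'
    have hOff0 : (0:ℝ) ≤
          (if 0 < (i0:ℕ) then κx ((i0:ℕ)-1) (j0:ℕ) * Δt * ωx ((i0:ℕ)-1) (j0:ℕ)
              / (2 * Δx (i0:ℕ) * Δxh ((i0:ℕ)-1)) else 0)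
        + (if (i0:ℕ) + 1 < I then κx (i0:ℕ) (j0:ℕ) * Δt * ωx (i0:ℕ) (j0:ℕ)
              / (2 * Δx (i0:ℕ) * Δxh (i0:ℕ)) else 0)
        + (if 0 < (j0:ℕ) then κy (i0:ℕ) ((j0:ℕ)-1) * Δt * ωy (i0:ℕ) ((j0:ℕ)-1)
              / (2 * Δy (j0:ℕ) * Δyh ((j0:ℕ)-1)) else 0)
        + (if (j0:ℕ) + 1 < J then κy (i0:ℕ) (j0:ℕ) * Δt * ωy (i0:ℕ) (j0:ℕ)
              / (2 * Δy (j0:ℕ) * Δyh (j0:ℕ)) else 0) :=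
      add_nonneg (add_nonneg (add_nonneg (hite _ _ hcL.le) (hite _ _ hcR.le))
        (hite _ _ hcD.le)) (hite _ _ hcU.le)
    have habs : |M (i0, j0) (i0, j0)| = M (i0, j0) (i0, j0) := by
      rw [abs_of_nonneg]
      rw [hdiag]; linarith
    rw [habs, hdiag, hsum, Finset.sum_add_distrib, Finset.sum_add_distrib,
      Finset.sum_add_distrib, hS1, hS2, hS3, hS4]
    linarith
  refine ⟨key, ?_⟩
  rw [Matrix.isUnit_iff_isUnit_det, isUnit_iff_ne_zero]
  apply det_ne_zero_of_sum_row_lt_diag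
  simpa [Real.norm_eq_abs] using key
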